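/- Let q ∈ L¹(ℝᴺ) be a nonnegative even function. Then for all measurable functions u : ℝᴺ → ℝ, ℰ_{q*q}(u,u) ≤ 4‖q‖_{L¹(ℝᴺ)} ℰ_q(u,u), where q*q is the convolution of q with itself. -/

import Mathlib

open MeasureTheory ENNReal Filter Topology

noncomputable section

/-- N-dimensional Euclidean space. -/
abbrev Euc (N : ℕ) := EuclideanSpace ℝ (Fin N)

/-- The nonlocal quadratic form ℰ_j(u,u) = (1/2)∬ (u(x)-u(y))² j(x-y) dx dy. -/
def Ej {N : ℕ} (j : Euc N → ℝ≥0∞) (u : Euc N → ℝ) : ℝ≥0∞ :=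
  (1/2 : ℝ≥0∞) * ∫⁻ p : Euc N × Euc N,
    ENNReal.ofReal ((u p.1 - u p.2)^2) * j (p.1 - p.2) ∂(volume.prod volume)

/-- The squared L² norm of u. -/
def l2sq {N : ℕ} (u : Euc N → ℝ) : ℝ≥0∞ := ∫⁻ x, ENNReal.ofReal ((u x)^2)

/-- The squared norm of 𝒟ʲ(ℝᴺ): ‖u‖² = ℰ_j(u,u) + ‖u‖²_{L²}. -/
def DnormSq {N : ℕ} (j : Euc N → ℝ≥0∞) (u : Euc N → ℝ) : ℝ≥0∞ := Ej j u + l2sq u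

/-- Membership in 𝒟ʲ(ℝᴺ) = {u ∈ L² : ℰ_j(u,u) < ∞}. -/
def MemDj {N : ℕ} (j : Euc N → ℝ≥0∞) (u : Euc N → ℝ) : Prop :=
  MemLp u 2 (volume : Measure (Euc N)) ∧ Ej j u < ⊤

/-- Condition (A1): 0 < ∫ min{1,|z|²} j(z) dz < ∞ (evenness stated separately). -/
def CondA1 {N : ℕ} (j : Euc N → ℝ≥0∞) : Prop :=
  0 < ∫⁻ z, ENNReal.ofReal (min 1 (‖z‖^2)) * j z ∧
    (∫⁻ z, ENNReal.ofReal (min 1 (‖z‖^2)) * j z) < ⊤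

/-- ℰ_k for a real-valued nonnegative kernel k. -/
def EjR {N : ℕ} (k : Euc N → ℝ) (u : Euc N → ℝ) : ℝ≥0∞ :=
  (1/2 : ℝ≥0∞) * ∫⁻ p : Euc N × Euc N,
    ENNReal.ofReal ((u p.1 - u p.2)^2 * k (p.1 - p.2)) ∂(volume.prod volume)

/-- The elementary pointwise inequality in `ℝ≥0∞` form. -/
lemma ofReal_sq_sub_le (a b c : ℝ) :
    ENNReal.ofReal ((a - b)^2) ≤
      2 * ENNReal.ofReal ((a - c)^2) + 2 * ENNReal.ofReal ((c - b)^2) := by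
  have h : (a - b)^2 ≤ 2*(a - c)^2 + 2*(c - b)^2 := by nlinarith [sq_nonneg (a - 2*c + b)]
  calc ENNReal.ofReal ((a - b)^2) ≤ ENNReal.ofReal (2*(a - c)^2 + 2*(c - b)^2) :=
        ENNReal.ofReal_le_ofReal h
    _ = 2 * ENNReal.ofReal ((a - c)^2) + 2 * ENNReal.ofReal ((c - b)^2) := by
        rw [ENNReal.ofReal_add (by positivity) (by positivity),
          ENNReal.ofReal_mul (by norm_num), ENNReal.ofReal_mul (by norm_num)]
        norm_num

/-- For a nonnegative even q ∈ L¹, ℰ_{q∗q}(u,u) ≤ 4‖q‖_{L¹} ℰ_q(u,u). -/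
theorem Ej_convolution_bound {N : ℕ} (q : Euc N → ℝ)
    (hq : Integrable q (volume : Measure (Euc N)))
    (hq0 : ∀ z, 0 ≤ q z) (heven : ∀ z, q (-z) = q z)
    (u : Euc N → ℝ) (hu : Measurable u) :
    EjR (fun z => ∫ y, q y * q (z - y)) u ≤ ENNReal.ofReal (4 * ∫ z, q z) * EjR q u := by
  classical
  -- measurable nonnegative representative of q
  obtain ⟨g, gmeas, hg0, hqg⟩ :
      ∃ g : Euc N → ℝ, Measurable g ∧ (∀ z, 0 ≤ g z) ∧ q =ᵐ[volume] g := by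
    refine ⟨fun z => max (hq.1.mk q z) 0,
      (hq.1.stronglyMeasurable_mk.measurable).max measurable_const,
      fun z => le_max_right _ _, ?_⟩
    filter_upwards [hq.1.ae_eq_mk] with z hz
    simp [← hz, max_eq_left (hq0 z)]
  have hgint : Integrable g volume := hq.congr hqg
  set F : Euc N × Euc N → ℝ≥0∞ := fun p => ENNReal.ofReal ((u p.1 - u p.2)^2) with hF
  set G : Euc N → ℝ≥0∞ := fun z => ENNReal.ofReal (g z) with hG
  have Fm : Measurable F :=
    (((hu.comp measurable_fst).sub (hu.comp measurable_snd)).pow_const 2).ennreal_ofReal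
  have Gm : Measurable G := gmeas.ennreal_ofReal
  set C : ℝ≥0∞ := ∫⁻ z, G z with hCdef
  -- the total mass
  have hC : ENNReal.ofReal (∫ z, q z) = C := by
    rw [integral_congr_ae hqg]
    exact ofReal_integral_eq_lintegral_ofReal hgint (ae_of_all _ hg0)
  set I : ℝ≥0∞ := ∫⁻ p : Euc N × Euc N, F p * G (p.1 - p.2) ∂(volume.prod volume) with hIdef
  -- EjR g u in ℝ≥0∞ split form
  have hEg : EjR g u = (1/2 : ℝ≥0∞) * I := by
    unfold EjR
    congr 1
    exact lintegral_congr fun p => ENNReal.ofReal_mul (sq_nonneg _)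
  -- quasi measure preserving subtraction on the product
  have hsubqmp : Measure.QuasiMeasurePreserving (fun p : Euc N × Euc N => p.1 - p.2)
      ((volume : Measure (Euc N)).prod volume) volume :=
    Measure.quasiMeasurePreserving_fst.comp
      (measurePreserving_sub_prod (volume : Measure (Euc N)) volume).quasiMeasurePreserving
  -- EjR q u = EjR g u
  have hEq : EjR q u = EjR g u := by
    unfold EjR
    congr 1
    refine lintegral_congr_ae ?_
    filter_upwards [hsubqmp.ae_eq hqg] with p hp
    simp only [Function.comp] at hp
    rw [hp]
  -- the convolution kernel agrees for g
  have hk : ∀ z : Euc N, (∫ y, q y * q (z - y)) = ∫ y, g y * g (z - y) := by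
    intro z
    refine integral_congr_ae ?_
    have h1 : (fun y => q (z - y)) =ᵐ[volume] fun y => g (z - y) :=
      (Measure.measurePreserving_sub_left volume z).quasiMeasurePreserving.ae_eq hqg
    filter_upwards [hqg, h1] with y h h'
    rw [h, h']
  -- kernel bound in ℝ≥0∞
  have hkey : ∀ z : Euc N,
      ENNReal.ofReal (∫ y, g y * g (z - y)) ≤ ∫⁻ y, G y * G (z - y) := by
    intro z
    by_cases hint : Integrable (fun y => g y * g (z - y)) volume
    · rw [ofReal_integral_eq_lintegral_ofReal hint
        (ae_of_all _ fun y => mul_nonneg (hg0 y) (hg0 _))]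
      exact le_of_eq (lintegral_congr fun y => ENNReal.ofReal_mul (hg0 y))
    · rw [integral_undef hint]; simp
  -- change of variables inside: ∫ G w G(x-y-w) dw = ∫ G(x-z)G(z-y) dz
  have hcv : ∀ x y : Euc N,
      (∫⁻ w, G w * G (x - y - w)) = ∫⁻ z, G (x - z) * G (z - y) := by
    intro x y
    rw [← (Measure.measurePreserving_sub_left volume x).lintegral_comp
      (f := fun w => G w * G (x - y - w)) (Gm.mul (Gm.comp (measurable_const.sub measurable_id)))]
    refine lintegral_congr fun z => ?_
    have : x - y - (x - z) = z - y := by abel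
    rw [this]
  -- the main estimate
  have hGsub : Measurable fun p : Euc N × Euc N => G (p.1 - p.2) :=
    Gm.comp (measurable_fst.sub measurable_snd)
  -- inner triple integrand measurability helpers
  have hGxz : ∀ᵉ (x : Euc N), Measurable fun z => G (x - z) :=
    fun x => Gm.comp (measurable_const.sub measurable_id)
  have hGzy : ∀ᵉ (y : Euc N), Measurable fun z => G (z - y) :=
    fun y => Gm.comp (measurable_id.sub measurable_const)
  have hFG : Measurable fun p : Euc N × Euc N => F p * G (p.1 - p.2) := Fm.mul hGsub
  have hSm : Measurable fun x : Euc N => ∫⁻ z, F (x, z) * G (x - z) :=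
    Measurable.lintegral_prod_right' hFG
  have hinner_m : Measurable fun p : Euc N × Euc N => ∫⁻ z, G (p.1 - z) * G (z - p.2) :=
    Measurable.lintegral_prod_right'
      (f := fun q : (Euc N × Euc N) × Euc N => G (q.1.1 - q.2) * G (q.2 - q.1.2)) (by fun_prop)
  have hIit : I = ∫⁻ x, ∫⁻ z, F (x, z) * G (x - z) := by
    rw [hIdef]; exact lintegral_prod _ hFG.aemeasurable
  have hCz : ∀ z : Euc N, (∫⁻ y, G (z - y)) = C := fun z =>
    (Measure.measurePreserving_sub_left volume z).lintegral_comp Gm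
  have hCz' : ∀ z : Euc N, (∫⁻ x, G (x - z)) = C := fun z =>
    (measurePreserving_sub_right volume z).lintegral_comp Gm
  have m1 : Measurable fun p : Euc N × Euc N =>
      ∫⁻ z, 2 * F (p.1, z) * (G (p.1 - z) * G (z - p.2)) :=
    Measurable.lintegral_prod_right'
      (f := fun q : (Euc N × Euc N) × Euc N =>
        2 * F (q.1.1, q.2) * (G (q.1.1 - q.2) * G (q.2 - q.1.2))) (by fun_prop)
  have m2 : Measurable fun p : Euc N × Euc N =>
      ∫⁻ z, 2 * F (z, p.2) * (G (p.1 - z) * G (z - p.2)) :=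
    Measurable.lintegral_prod_right'
      (f := fun q : (Euc N × Euc N) × Euc N =>
        2 * F (q.2, q.1.2) * (G (q.1.1 - q.2) * G (q.2 - q.1.2))) (by fun_prop)
  -- first triple integral
  have hA : (∫⁻ x, ∫⁻ y, ∫⁻ z, 2 * F (x, z) * (G (x - z) * G (z - y))) = 2 * C * I := by
    have hx : ∀ x : Euc N, (∫⁻ y, ∫⁻ z, 2 * F (x, z) * (G (x - z) * G (z - y)))
        = (2 * C) * ∫⁻ z, F (x, z) * G (x - z) := by
      intro x
      rw [lintegral_lintegral_swap (by fun_prop)]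
      calc (∫⁻ z, ∫⁻ y, 2 * F (x, z) * (G (x - z) * G (z - y)))
          = ∫⁻ z, 2 * F (x, z) * G (x - z) * ∫⁻ y, G (z - y) := by
            refine lintegral_congr fun z => ?_
            rw [← lintegral_const_mul _ (by fun_prop : Measurable fun y => G (z - y))]
            exact lintegral_congr fun y => by ring
        _ = ∫⁻ z, (2 * C) * (F (x, z) * G (x - z)) := by
            refine lintegral_congr fun z => ?_
            rw [hCz z]; ring
        _ = (2 * C) * ∫⁻ z, F (x, z) * G (x - z) := lintegral_const_mul _ (by fun_prop)
    calc (∫⁻ x, ∫⁻ y, ∫⁻ z, 2 * F (x, z) * (G (x - z) * G (z - y)))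
        = ∫⁻ x, (2 * C) * ∫⁻ z, F (x, z) * G (x - z) := lintegral_congr hx
      _ = (2 * C) * ∫⁻ x, ∫⁻ z, F (x, z) * G (x - z) := lintegral_const_mul _ hSm
      _ = 2 * C * I := by rw [← hIit]
  -- second triple integral
  have hB : (∫⁻ x, ∫⁻ y, ∫⁻ z, 2 * F (z, y) * (G (x - z) * G (z - y))) = 2 * C * I := by
    have hswap1 : ∀ x : Euc N, (∫⁻ y, ∫⁻ z, 2 * F (z, y) * (G (x - z) * G (z - y)))
        = ∫⁻ z, ∫⁻ y, 2 * F (z, y) * (G (x - z) * G (z - y)) :=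
      fun x => lintegral_lintegral_swap (by fun_prop)
    calc (∫⁻ x, ∫⁻ y, ∫⁻ z, 2 * F (z, y) * (G (x - z) * G (z - y)))
        = ∫⁻ x, ∫⁻ z, ∫⁻ y, 2 * F (z, y) * (G (x - z) * G (z - y)) := lintegral_congr hswap1
      _ = ∫⁻ z, ∫⁻ x, ∫⁻ y, 2 * F (z, y) * (G (x - z) * G (z - y)) :=
          lintegral_lintegral_swap
            ((Measurable.lintegral_prod_right'
              (f := fun q : (Euc N × Euc N) × Euc N =>
                2 * F (q.1.2, q.2) * (G (q.1.1 - q.1.2) * G (q.1.2 - q.2)))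
              (by fun_prop)).aemeasurable)
      _ = ∫⁻ z, ∫⁻ x, G (x - z) * ∫⁻ y, 2 * (F (z, y) * G (z - y)) := by
          refine lintegral_congr fun z => lintegral_congr fun x => ?_
          rw [← lintegral_const_mul _ (by fun_prop : Measurable fun y => 2 * (F (z, y) * G (z - y)))]
          exact lintegral_congr fun y => by ring
      _ = ∫⁻ z, (∫⁻ x, G (x - z)) * ∫⁻ y, 2 * (F (z, y) * G (z - y)) :=
          lintegral_congr fun z => lintegral_mul_const _ (by fun_prop)
      _ = ∫⁻ z, (2 * C) * ∫⁻ y, F (z, y) * G (z - y) := by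
          refine lintegral_congr fun z => ?_
          rw [hCz' z, lintegral_const_mul 2 (by fun_prop : Measurable fun y => F (z, y) * G (z - y))]
          ring
      _ = (2 * C) * ∫⁻ z, ∫⁻ y, F (z, y) * G (z - y) := lintegral_const_mul _ hSm
      _ = 2 * C * I := by rw [← hIit]
  -- the main estimate
  have hmain : EjR (fun z => ∫ y, q y * q (z - y)) u ≤ (1/2 : ℝ≥0∞) * (4 * C * I) := by
    have hL : EjR (fun z => ∫ y, q y * q (z - y)) u
        = (1/2 : ℝ≥0∞) * ∫⁻ p : Euc N × Euc N,
            F p * ENNReal.ofReal (∫ y, g y * g (p.1 - p.2 - y)) ∂(volume.prod volume) := by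
      unfold EjR
      congr 1
      refine lintegral_congr fun p => ?_
      rw [ENNReal.ofReal_mul (sq_nonneg _),
        show (fun z => ∫ y, q y * q (z - y)) (p.1 - p.2)
          = ∫ y, g y * g (p.1 - p.2 - y) from hk _]
    rw [hL]
    refine mul_le_mul_right ?_ _
    calc (∫⁻ p : Euc N × Euc N,
            F p * ENNReal.ofReal (∫ y, g y * g (p.1 - p.2 - y)) ∂(volume.prod volume))
        ≤ ∫⁻ p : Euc N × Euc N,
            F p * (∫⁻ z, G (p.1 - z) * G (z - p.2)) ∂(volume.prod volume) := by
          refine lintegral_mono fun p => mul_le_mul_right ?_ _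
          exact (hkey _).trans (le_of_eq (hcv p.1 p.2))
      _ = ∫⁻ x, ∫⁻ y, F (x, y) * ∫⁻ z, G (x - z) * G (z - y) :=
          lintegral_prod _ (Fm.mul hinner_m).aemeasurable
      _ ≤ ∫⁻ x, ∫⁻ y, ((∫⁻ z, 2 * F (x, z) * (G (x - z) * G (z - y)))
            + ∫⁻ z, 2 * F (z, y) * (G (x - z) * G (z - y))) := by
          refine lintegral_mono fun x => lintegral_mono fun y => ?_
          calc F (x, y) * ∫⁻ z, G (x - z) * G (z - y)
              = ∫⁻ z, F (x, y) * (G (x - z) * G (z - y)) :=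
                (lintegral_const_mul _ (by fun_prop)).symm
            _ ≤ ∫⁻ z, (2 * F (x, z) + 2 * F (z, y)) * (G (x - z) * G (z - y)) :=
                lintegral_mono fun z =>
                  mul_le_mul_left (ofReal_sq_sub_le (u x) (u y) (u z)) _
            _ = ∫⁻ z, (2 * F (x, z) * (G (x - z) * G (z - y))
                  + 2 * F (z, y) * (G (x - z) * G (z - y))) :=
                lintegral_congr fun z => add_mul _ _ _
            _ = _ := lintegral_add_left (by fun_prop) _
      _ = (∫⁻ x, ((∫⁻ y, ∫⁻ z, 2 * F (x, z) * (G (x - z) * G (z - y)))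
            + ∫⁻ y, ∫⁻ z, 2 * F (z, y) * (G (x - z) * G (z - y)))) :=
          lintegral_congr fun x =>
            lintegral_add_left (m1.comp measurable_prodMk_left) _
      _ = (∫⁻ x, ∫⁻ y, ∫⁻ z, 2 * F (x, z) * (G (x - z) * G (z - y)))
            + ∫⁻ x, ∫⁻ y, ∫⁻ z, 2 * F (z, y) * (G (x - z) * G (z - y)) :=
          lintegral_add_left (Measurable.lintegral_prod_right' m1) _
      _ = 4 * C * I := by rw [hA, hB]; ring
  -- conclude
  have hR : ENNReal.ofReal (4 * ∫ z, q z) = 4 * C := by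
    rw [ENNReal.ofReal_mul (by norm_num : (0:ℝ) ≤ 4), hC]
    norm_num
  rw [hR, hEq, hEg]
  refine hmain.trans (le_of_eq ?_)
  ring
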